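/- For every partition ℝ² = A₁ ∪ A₂ of the Euclidean plane into two sets, one of the sets A_i contains a subset S that is unbounded and centrally symmetric with respect to some point c ∈ ℝ², i.e., S = {2c − x : x ∈ S}. -/

import Mathlib

open Set

private abbrev V2 := EuclideanSpace ℝ (Fin 2)

private lemma coord_le_norm (x : V2) (i : Fin 2) : |x i| ≤ ‖x‖ := by
  have h := abs_real_inner_le_norm (EuclideanSpace.single i (1 : ℝ)) x
  simpa [EuclideanSpace.inner_single_left] using h

/-- For every partition of the Euclidean plane into two pieces, one of the pieces
contains an unbounded centrally symmetric subset. -/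
theorem two_partition_of_plane_has_unbounded_symmetric_subset
    (A₁ A₂ : Set (EuclideanSpace ℝ (Fin 2))) (hcover : A₁ ∪ A₂ = univ) :
    ∃ A ∈ ({A₁, A₂} : Set (Set (EuclideanSpace ℝ (Fin 2)))),
      ∃ (c : EuclideanSpace ℝ (Fin 2)) (S : Set (EuclideanSpace ℝ (Fin 2))),
        S ⊆ A ∧ ¬ Bornology.IsBounded S ∧ (fun x => 2 • c - x) '' S = S := by
  by_contra hcon
  push_neg at hcon
  -- From the negation: for every piece A and every center c, the "symmetric part"
  -- {x ∈ A | 2c - x ∈ A} is bounded.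
  have key : ∀ A ∈ ({A₁, A₂} : Set (Set V2)), ∀ c : V2,
      ∃ R : ℝ, ∀ x, x ∈ A → 2 • c - x ∈ A → ‖x‖ ≤ R := by
    intro A hA c
    have hsub : {x : V2 | x ∈ A ∧ 2 • c - x ∈ A} ⊆ A := fun x hx => hx.1
    have himg : (fun x => 2 • c - x) '' {x : V2 | x ∈ A ∧ 2 • c - x ∈ A}
        = {x : V2 | x ∈ A ∧ 2 • c - x ∈ A} := by
      ext y
      constructor
      · rintro ⟨x, hx, rfl⟩
        exact ⟨hx.2, by simpa using hx.1⟩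
      · intro hy
        exact ⟨2 • c - y, ⟨hy.2, by simpa using hy.1⟩, by simp⟩
    have hbdd : Bornology.IsBounded {x : V2 | x ∈ A ∧ 2 • c - x ∈ A} := by
      by_contra hb
      exact hcon A hA c _ hsub hb himg
    obtain ⟨R, hR⟩ := hbdd.exists_norm_le
    exact ⟨R, fun x h1 h2 => hR x ⟨h1, h2⟩⟩
  set e : V2 := EuclideanSpace.single (0 : Fin 2) (1 : ℝ) with he_def
  -- main translation-invariance lemma
  have main : ∀ A B : Set V2, A ∪ B = univ →
      (∀ c : V2, ∃ R : ℝ, ∀ x, x ∈ A → 2 • c - x ∈ A → ‖x‖ ≤ R) →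
      (∀ c : V2, ∃ R : ℝ, ∀ x, x ∈ B → 2 • c - x ∈ B → ‖x‖ ≤ R) →
      ∃ R : ℝ, ∀ p : V2, p ∈ A → (∀ n : ℤ, R < ‖p + (2 * (n : ℝ)) • e‖) →
        ∀ n : ℤ, p + (2 * (n : ℝ)) • e ∈ A := by
    intro A B hAB hA hB
    obtain ⟨R0, h0⟩ := hA 0
    obtain ⟨Re, hRe⟩ := hB e
    obtain ⟨Rne, hRne⟩ := hB (-e)
    refine ⟨max R0 (max Re Rne), ?_⟩
    intro p hp hfar
    have cover : ∀ x : V2, x ∈ A ∨ x ∈ B := fun x => by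
      have hx : x ∈ A ∪ B := by rw [hAB]; exact mem_univ x
      exact hx
    have hnxB : ∀ x : V2, x ∈ A → max R0 (max Re Rne) < ‖x‖ → -x ∈ B := by
      intro x hx hxn
      rcases cover (-x) with h | h
      · exfalso
        have hle := h0 x hx (by simpa using h)
        have : R0 < ‖x‖ := lt_of_le_of_lt (le_max_left _ _) hxn
        linarith
      · exact h
    have stepf : ∀ x : V2, x ∈ A → max R0 (max Re Rne) < ‖x‖ →
        x + (2 : ℝ) • e ∈ A := by
      intro x hx hxn
      have hnx := hnxB x hx hxn
      rcases cover (x + (2 : ℝ) • e) with h | h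
      · exact h
      · exfalso
        have hmem : 2 • e - -x ∈ B := by
          have heq : (2 : ℕ) • e - -x = x + (2 : ℝ) • e := by
            rw [two_smul, two_smul]; abel
          rw [heq]; exact h
        have hle := hRe (-x) hnx hmem
        rw [norm_neg] at hle
        have : Re < ‖x‖ := lt_of_le_of_lt (le_trans (le_max_left _ _) (le_max_right _ _)) hxn
        linarith
    have stepb : ∀ x : V2, x ∈ A → max R0 (max Re Rne) < ‖x‖ →
        x - (2 : ℝ) • e ∈ A := by
      intro x hx hxn
      have hnx := hnxB x hx hxn
      rcases cover (x - (2 : ℝ) • e) with h | h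
      · exact h
      · exfalso
        have hmem : 2 • (-e) - -x ∈ B := by
          have heq : (2 : ℕ) • (-e) - -x = x - (2 : ℝ) • e := by
            rw [two_smul, two_smul]; abel
          rw [heq]; exact h
        have hle := hRne (-x) hnx hmem
        rw [norm_neg] at hle
        have : Rne < ‖x‖ := lt_of_le_of_lt (le_trans (le_max_right _ _) (le_max_right _ _)) hxn
        linarith
    intro n
    induction n using Int.induction_on with
    | zero => simpa using hp
    | succ k ih =>
        have hstep := stepf (p + (2 * (k : ℝ)) • e) ih (hfar k)
        have heq : p + (2 * ((k : ℤ) + 1 : ℤ) : ℝ) • e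
            = p + (2 * (k : ℝ)) • e + (2 : ℝ) • e := by
          push_cast
          rw [show (2 * ((k : ℝ) + 1)) = 2 * (k : ℝ) + 2 by ring, add_smul]
          abel
        rw [heq]; exact hstep
    | pred k ih =>
        have hstep := stepb (p + (2 * ((-k : ℤ) : ℝ)) • e) ih (hfar (-k))
        have heq : p + (2 * ((-(k : ℤ) - 1 : ℤ)) : ℝ) • e
            = p + (2 * ((-k : ℤ) : ℝ)) • e - (2 : ℝ) • e := by
          push_cast
          rw [show (2 * (-(k : ℝ) - 1)) = 2 * (-(k : ℝ)) + (-2) by ring, add_smul]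
          rw [show ((-2 : ℝ)) • e = -((2:ℝ) • e) by rw [neg_smul]]
          abel
        rw [heq]; exact hstep
  have hA₁mem : A₁ ∈ ({A₁, A₂} : Set (Set V2)) := by simp
  have hA₂mem : A₂ ∈ ({A₁, A₂} : Set (Set V2)) := by simp
  obtain ⟨RA, hRA⟩ := main A₁ A₂ hcover (key A₁ hA₁mem) (key A₂ hA₂mem)
  obtain ⟨RB, hRB⟩ := main A₂ A₁ (by rw [union_comm]; exact hcover) (key A₂ hA₂mem) (key A₁ hA₁mem)
  set D : ℝ := max (max RA RB) 0 + 1 with hD_def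
  set p : V2 := D • EuclideanSpace.single (1 : Fin 2) (1 : ℝ) with hp_def
  set g : ℤ → V2 := fun n => p + (2 * (n : ℝ)) • e with hg_def
  have hcoord1 : ∀ n : ℤ, (g n) 1 = D := by
    intro n
    simp [hg_def, hp_def, he_def, EuclideanSpace.single_apply]
  have hcoord0 : ∀ n : ℤ, (g n) 0 = 2 * (n : ℝ) := by
    intro n
    simp [hg_def, hp_def, he_def, EuclideanSpace.single_apply]
  have hDnorm : ∀ n : ℤ, D ≤ ‖g n‖ := by
    intro n
    have h := coord_le_norm (g n) 1
    rw [hcoord1 n] at h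
    have hDpos : 0 ≤ D := by
      rw [hD_def]; positivity
    calc D = |D| := (abs_of_nonneg hDpos).symm
    _ ≤ ‖g n‖ := h
  have hfar : ∀ (R : ℝ), R ≤ max (max RA RB) 0 → ∀ n : ℤ, R < ‖g n‖ := by
    intro R hRle n
    have := hDnorm n
    rw [hD_def] at this
    linarith
  -- unboundedness of the range of g
  have hunb : ¬ Bornology.IsBounded (Set.range g) := by
    intro hb
    obtain ⟨R, hR⟩ := hb.exists_norm_le
    obtain ⟨n, hn⟩ := exists_nat_gt R
    have h1 := hR (g n) ⟨(n : ℤ), rfl⟩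
    have h2 := coord_le_norm (g n) 0
    rw [hcoord0] at h2
    have h3 : (n : ℝ) ≤ |2 * (n : ℝ)| := by
      rw [abs_of_nonneg (by positivity)]
      have : (0:ℝ) ≤ (n:ℝ) := Nat.cast_nonneg n
      linarith
    push_cast at h2 h3
    linarith
  -- symmetry of the range of g about p
  have hsym : (fun x => 2 • p - x) '' Set.range g = Set.range g := by
    have hrefl : ∀ n : ℤ, 2 • p - g n = g (-n) := by
      intro n
      show (2 : ℕ) • p - (p + (2 * (n : ℝ)) • e) = p + (2 * ((-n : ℤ) : ℝ)) • e
      push_cast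
      rw [two_smul, show (2 * (-(n:ℝ))) = -(2 * (n : ℝ)) by ring, neg_smul]
      abel
    ext y
    constructor
    · rintro ⟨x, ⟨n, rfl⟩, rfl⟩
      exact ⟨-n, (hrefl n).symm⟩
    · rintro ⟨n, rfl⟩
      refine ⟨g (-n), ⟨-n, rfl⟩, ?_⟩
      have := hrefl (-n)
      rw [neg_neg] at this
      exact this
  -- now p belongs to A₁ or A₂; in either case we contradict hcon
  have hpmem : p ∈ A₁ ∪ A₂ := by rw [hcover]; exact mem_univ p
  rcases hpmem with hpA | hpA
  · have hsub : Set.range g ⊆ A₁ := by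
      rintro y ⟨n, rfl⟩
      exact hRA p hpA (hfar RA (le_trans (le_max_left _ _) (le_max_left _ _))) n
    exact hcon A₁ hA₁mem p (Set.range g) hsub hunb hsym
  · have hsub : Set.range g ⊆ A₂ := by
      rintro y ⟨n, rfl⟩
      exact hRB p hpA (hfar RB (le_trans (le_max_right _ _) (le_max_left _ _))) n
    exact hcon A₂ hA₂mem p (Set.range g) hsub hunb hsym
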